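/- Suppose W is continuously differentiable, c ∈ ℝ, S = {x ∈ R : W(x) < c} where R is open, closure(S) ⊆ R, and ⟨∇W(x), f(x)⟩ < 0 for all x ∈ S with x ≠ 0. Then any solution x(t) of ẋ = f(x) with x(0) ∈ S, x(t) ≠ 0 for all t in [0,T], remains in S for all t ∈ [0,T]. -/

import Mathlib

theorem trajectory_stays_in_sublevel {n : ℕ}
    (R : Set (EuclideanSpace ℝ (Fin n))) (hRopen : IsOpen R)
    (W : EuclideanSpace ℝ (Fin n) → ℝ) (hW : ContDiff ℝ 1 W)
    (f : EuclideanSpace ℝ (Fin n) → EuclideanSpace ℝ (Fin n)) (hf : Continuous f)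
    (c : ℝ) (S : Set (EuclideanSpace ℝ (Fin n)))
    (hS : S = {x ∈ R | W x < c})
    (hScl : closure S ⊆ R)
    (hdecr : ∀ y ∈ S, y ≠ 0 → (inner ℝ (gradient W y) (f y) : ℝ) < 0)
    (T : ℝ) (hT : 0 ≤ T)
    (x : ℝ → EuclideanSpace ℝ (Fin n))
    (hx : ∀ t ∈ Set.Icc (0:ℝ) T, HasDerivAt x (f (x t)) t)
    (hx0 : x 0 ∈ S)
    (hxne : ∀ t ∈ Set.Icc (0:ℝ) T, x t ≠ 0) :
    ∀ t ∈ Set.Icc (0:ℝ) T, x t ∈ S := by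
  -- gradient identity
  have hgrad : ∀ y v, (inner ℝ (gradient W y) v : ℝ) = fderiv ℝ W y v := by
    intro y v
    simp [gradient, InnerProductSpace.toDual_symm_apply]
  -- derivative of W ∘ x
  have hg : ∀ t ∈ Set.Icc (0:ℝ) T,
      HasDerivAt (fun s => W (x s)) (fderiv ℝ W (x t) (f (x t))) t := by
    intro t ht
    exact ((hW.differentiable one_ne_zero (x t)).hasFDerivAt).comp_hasDerivAt t (hx t ht)
  have hSopen : IsOpen S := by
    rw [hS]
    exact hRopen.inter (isOpen_lt (hW.continuous) continuous_const)
  by_contra hcon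
  push_neg at hcon
  obtain ⟨t₁, ht₁, hxt₁⟩ := hcon
  set B : Set ℝ := {t ∈ Set.Icc (0:ℝ) T | x t ∉ S} with hB
  have hxcont : ContinuousOn x (Set.Icc 0 T) :=
    fun t ht => ((hx t ht).continuousAt).continuousWithinAt
  have hBclosed : IsClosed B := by
    have := hxcont.preimage_isClosed_of_isClosed isClosed_Icc hSopen.isClosed_compl
    exact this
  have hBne : B.Nonempty := ⟨t₁, ht₁, hxt₁⟩
  have hBbdd : BddBelow B := ⟨0, fun t ht => ht.1.1⟩
  set t₀ := sInf B with ht₀def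
  have ht₀B : t₀ ∈ B := hBclosed.csInf_mem hBne hBbdd
  obtain ⟨ht₀Icc, hxt₀⟩ := ht₀B
  have ht₀pos : 0 < t₀ := by
    rcases lt_or_eq_of_le ht₀Icc.1 with h | h
    · exact h
    · exact absurd hx0 (by rwa [← h] at hxt₀)
  -- points before t₀ are in S
  have hbefore : ∀ s ∈ Set.Ico (0:ℝ) t₀, x s ∈ S := by
    intro s hs
    by_contra hsn
    have : t₀ ≤ s := csInf_le hBbdd ⟨⟨hs.1, le_trans hs.2.le ht₀Icc.2⟩, hsn⟩
    exact absurd hs.2 (not_lt.2 this)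
  -- x t₀ ∈ closure S hence ∈ R
  have hxt₀cl : x t₀ ∈ closure S := by
    have hcw : ContinuousWithinAt x (Set.Ico 0 t₀) t₀ :=
      (hxcont t₀ ht₀Icc).mono (fun s hs => ⟨hs.1, le_trans hs.2.le ht₀Icc.2⟩)
    have hmem : t₀ ∈ closure (Set.Ico (0:ℝ) t₀) := by
      rw [closure_Ico (ne_of_lt ht₀pos)]
      exact ⟨le_of_lt ht₀pos, le_rfl⟩
    exact hcw.mem_closure hmem hbefore
  have hxt₀R : x t₀ ∈ R := hScl hxt₀cl
  -- W ∘ x is strictly decreasing on [0, t₀]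
  have hanti : StrictAntiOn (fun s => W (x s)) (Set.Icc 0 t₀) := by
    apply strictAntiOn_of_deriv_neg (convex_Icc 0 t₀)
    · intro s hs
      exact ((hg s ⟨hs.1, le_trans hs.2 ht₀Icc.2⟩).continuousAt).continuousWithinAt
    · intro s hs
      rw [interior_Icc] at hs
      have hsT : s ∈ Set.Icc (0:ℝ) T := ⟨hs.1.le, le_trans hs.2.le ht₀Icc.2⟩
      rw [(hg s hsT).deriv]
      rw [← hgrad]
      exact hdecr (x s) (hbefore s ⟨hs.1.le, hs.2⟩) (hxne s hsT)
  have hW0 : W (x 0) < c := by rw [hS] at hx0; exact hx0.2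
  have hWt₀ : W (x t₀) < c :=
    lt_trans (hanti ⟨le_rfl, ht₀pos.le⟩ ⟨ht₀pos.le, le_rfl⟩ ht₀pos) hW0
  exact hxt₀ (by rw [hS]; exact ⟨hxt₀R, hWt₀⟩)
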